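/- If a T-periodic C^2 system ẋ = f(t, x) (f(t+T, x) = f(t, x)) is incrementally exponentially stable and forward complete, then for every t0 there exists a unique T-periodic solution η : [t0, ∞) → R^n, and every solution x satisfies |x(t) - η(t)| ≤ k e^{-λ(t - t0)} |x(t0) - η(t0)| for all t ≥ t0. -/

import Mathlib

/-- A `T`-periodic, forward complete, C² system that is incrementally
exponentially stable admits, for every `t0`, a unique `T`-periodic solution `η` on
`[t0, ∞)`, toward which every solution converges exponentially. -/
theorem stmt_14 (n : ℕ)
    (f : ℝ → EuclideanSpace ℝ (Fin n) → EuclideanSpace ℝ (Fin n))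
    (hf : ContDiff ℝ 2 (Function.uncurry f))
    (T : ℝ) (hT : 0 < T) (hper : ∀ t x, f (t + T) x = f t x)
    (hcomplete : ∀ (t0 : ℝ) (x0 : EuclideanSpace ℝ (Fin n)),
      ∃ x : ℝ → EuclideanSpace ℝ (Fin n), x t0 = x0 ∧
        ∀ t, t0 ≤ t → HasDerivAt x (f t (x t)) t)
    (k lam : ℝ) (hk : 0 < k) (hlam : 0 < lam)
    (hIES : ∀ (t0 : ℝ) (x1 x2 : ℝ → EuclideanSpace ℝ (Fin n)),
      (∀ t, t0 ≤ t → HasDerivAt x1 (f t (x1 t)) t) →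
      (∀ t, t0 ≤ t → HasDerivAt x2 (f t (x2 t)) t) →
      ∀ t, t0 ≤ t →
        ‖x1 t - x2 t‖ ≤ k * Real.exp (-lam * (t - t0)) * ‖x1 t0 - x2 t0‖) :
    ∀ t0 : ℝ, ∃ η : ℝ → EuclideanSpace ℝ (Fin n),
      (∀ t, t0 ≤ t → HasDerivAt η (f t (η t)) t) ∧
      (∀ t, t0 ≤ t → η (t + T) = η t) ∧
      (∀ x : ℝ → EuclideanSpace ℝ (Fin n),
        (∀ t, t0 ≤ t → HasDerivAt x (f t (x t)) t) →
        ∀ t, t0 ≤ t →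
          ‖x t - η t‖ ≤ k * Real.exp (-lam * (t - t0)) * ‖x t0 - η t0‖) ∧
      (∀ η' : ℝ → EuclideanSpace ℝ (Fin n),
        (∀ t, t0 ≤ t → HasDerivAt η' (f t (η' t)) t) →
        (∀ t, t0 ≤ t → η' (t + T) = η' t) →
        ∀ t, t0 ≤ t → η' t = η t) := by
  intro t0
  classical
  -- the solution operator from time `t0`
  set sol : EuclideanSpace ℝ (Fin n) → ℝ → EuclideanSpace ℝ (Fin n) :=
    fun x0 => Classical.choose (hcomplete t0 x0) with hsoldef
  have hsol0 : ∀ x0, sol x0 t0 = x0 := fun x0 =>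
    (Classical.choose_spec (hcomplete t0 x0)).1
  have hsolD : ∀ x0 t, t0 ≤ t → HasDerivAt (sol x0) (f t (sol x0 t)) t := fun x0 =>
    (Classical.choose_spec (hcomplete t0 x0)).2
  -- uniqueness of solutions
  have huniq : ∀ x1 x2 : ℝ → EuclideanSpace ℝ (Fin n),
      (∀ t, t0 ≤ t → HasDerivAt x1 (f t (x1 t)) t) →
      (∀ t, t0 ≤ t → HasDerivAt x2 (f t (x2 t)) t) →
      x1 t0 = x2 t0 → ∀ t, t0 ≤ t → x1 t = x2 t := by
    intro x1 x2 h1 h2 h0 t ht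
    have h := hIES t0 x1 x2 h1 h2 t ht
    rw [h0, sub_self, norm_zero, mul_zero] at h
    have hz : ‖x1 t - x2 t‖ = 0 := le_antisymm h (norm_nonneg _)
    exact sub_eq_zero.mp (norm_eq_zero.mp hz)
  -- periodicity of `f` with period `m * T`
  have hperm : ∀ (m : ℕ) (t : ℝ) (x : EuclideanSpace ℝ (Fin n)),
      f (t + m * T) x = f t x := by
    intro m
    induction m with
    | zero => intro t x; simp
    | succ m ih =>
      intro t x
      have : t + (m + 1 : ℕ) * T = (t + m * T) + T := by push_cast; ring
      rw [this, hper, ih]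
  -- shifting a solution by `m * T` gives a solution
  have hshift : ∀ (m : ℕ) (x : ℝ → EuclideanSpace ℝ (Fin n)),
      (∀ t, t0 ≤ t → HasDerivAt x (f t (x t)) t) →
      ∀ t, t0 ≤ t → HasDerivAt (fun s => x (s + m * T))
        (f t (x (t + m * T))) t := by
    intro m x hx t ht
    have hmT : (0 : ℝ) ≤ m * T := by positivity
    have hd : HasDerivAt (fun s : ℝ => s + m * T) 1 t := by
      simpa using (hasDerivAt_id t).add_const ((m : ℝ) * T)
    have := HasDerivAt.scomp t (hx (t + m * T) (by linarith)) hd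
    simpa [hperm m t, Function.comp_def] using this
  -- flow property: `sol (sol x0 (t0 + m*T)) t = sol x0 (t + m*T)` for `t ≥ t0`
  have hflow : ∀ (m : ℕ) (x0 : EuclideanSpace ℝ (Fin n)) (t : ℝ), t0 ≤ t →
      sol (sol x0 (t0 + m * T)) t = sol x0 (t + m * T) := by
    intro m x0 t ht
    refine huniq _ (fun s => sol x0 (s + m * T))
      (hsolD _) (hshift m (sol x0) (hsolD x0)) ?_ t ht
    rw [hsol0]
  -- choose `m` so that the `m`-step map is a contraction
  obtain ⟨m, hm⟩ := exists_nat_gt (Real.log k / (lam * T))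
  have hlT : (0 : ℝ) < lam * T := by positivity
  have hlogk : Real.log k < lam * (m * T) := by
    have := (div_lt_iff₀ hlT).mp hm
    nlinarith
  set c : ℝ := k * Real.exp (-lam * (m * T)) with hc
  have hc0 : 0 ≤ c := by positivity
  have hc1 : c < 1 := by
    have h1 : Real.exp (-lam * (m * T)) < Real.exp (-Real.log k) := by
      apply Real.exp_lt_exp.mpr; linarith
    have h2 : Real.exp (-Real.log k) = k⁻¹ := by
      rw [Real.exp_neg, Real.exp_log hk]
    calc c < k * k⁻¹ := by
            rw [hc]; exact (mul_lt_mul_iff_right₀ hk).mpr (h2 ▸ h1)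
      _ = 1 := mul_inv_cancel₀ (ne_of_gt hk)
  -- the `m`-step Poincaré map
  set Pm : EuclideanSpace ℝ (Fin n) → EuclideanSpace ℝ (Fin n) :=
    fun x0 => sol x0 (t0 + m * T) with hPm
  have hmT : (0 : ℝ) ≤ m * T := by positivity
  have hPmLip : ∀ x0 y0, dist (Pm x0) (Pm y0) ≤ c * dist x0 y0 := by
    intro x0 y0
    have := hIES t0 (sol x0) (sol y0) (hsolD x0) (hsolD y0) (t0 + m * T) (by linarith)
    rw [hsol0, hsol0] at this
    simp only [dist_eq_norm, hPm]
    calc ‖sol x0 (t0 + m * T) - sol y0 (t0 + m * T)‖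
        ≤ k * Real.exp (-lam * (t0 + m * T - t0)) * ‖x0 - y0‖ := this
      _ = c * ‖x0 - y0‖ := by rw [hc]; ring_nf
  have hC : ContractingWith ⟨c, hc0⟩ Pm := by
    constructor
    · exact_mod_cast hc1
    · exact LipschitzWith.of_dist_le_mul hPmLip
  -- its unique fixed point
  set xs : EuclideanSpace ℝ (Fin n) := ContractingWith.fixedPoint Pm hC with hxs
  have hxsfix : Pm xs = xs := ContractingWith.fixedPoint_isFixedPt hC
  -- `P xs` is also a fixed point of `Pm`, hence equal to `xs`
  have hcomm : Pm (sol xs (t0 + T)) = sol xs (t0 + T) := by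
    have h1 : Pm (sol xs (t0 + T)) = sol xs (t0 + T + m * T) := by
      -- use the flow property with one step of `T`
      have := hflow 1 xs (t0 + m * T) (by linarith)
      -- sol (sol xs (t0 + 1*T)) (t0 + m*T) = sol xs (t0 + m*T + 1*T)
      simp only [Nat.cast_one, one_mul] at this
      simpa [hPm, add_right_comm] using this
    have h2 : sol xs (t0 + T + m * T) = sol (Pm xs) (t0 + T) := by
      have := hflow m xs (t0 + T) (by linarith)
      rw [this]
    rw [h1, h2, hxsfix]
  have hPfix : sol xs (t0 + T) = xs :=
    ContractingWith.fixedPoint_unique' hC hcomm hxsfix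
  -- the periodic solution
  refine ⟨sol xs, hsolD xs, ?_, ?_, ?_⟩
  · -- periodicity
    intro t ht
    have h0 : (fun s => sol xs (s + T)) t0 = sol xs t0 := by
      simp only [hPfix, hsol0]
    exact huniq (fun s => sol xs (s + T)) (sol xs)
      (by simpa using hshift 1 (sol xs) (hsolD xs)) (hsolD xs) h0 t ht
  · -- exponential convergence
    intro x hx t ht
    exact hIES t0 x (sol xs) hx (hsolD xs) t ht
  · -- uniqueness
    intro η' hη'D hη'per t ht
    -- η' agrees with the solution from its initial value
    have hagree : ∀ s, t0 ≤ s → sol (η' t0) s = η' s :=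
      huniq (sol (η' t0)) η' (hsolD _) hη'D (hsol0 _)
    -- η' t0 is a fixed point of Pm
    have hper' : ∀ j : ℕ, η' (t0 + j * T) = η' t0 := by
      intro j
      induction j with
      | zero => simp
      | succ j ih =>
        have hjT : (0 : ℝ) ≤ (j : ℝ) * T :=
          mul_nonneg (Nat.cast_nonneg j) hT.le
        have he : t0 + ((j + 1 : ℕ) : ℝ) * T = (t0 + j * T) + T := by
          push_cast; ring
        rw [he, hη'per (t0 + j * T) (by linarith), ih]
    have hfix' : Pm (η' t0) = η' t0 := by
      rw [hPm]
      simp only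
      rw [hagree (t0 + m * T) (by linarith), hper' m]
    have : η' t0 = xs := ContractingWith.fixedPoint_unique' hC hfix' hxsfix
    have := huniq η' (sol xs) hη'D (hsolD xs) (by rw [hsol0, this]) t ht
    exact this
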